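/- Let (Ω, F, μ) be a probability space with filtration (F_n), weights v, ω₁, ω₂, and 1 < p₁, p₂ < ∞ with 1/p = 1/p₁ + 1/p₂. If the weak-type inequality ‖M(f,g)‖_{L^{p,∞}(v)} ≤ C ‖f‖_{L^{p₁}(ω₁)} ‖g‖_{L^{p₂}(ω₂)} holds for all f ∈ L^{p₁}(ω₁), g ∈ L^{p₂}(ω₂), then for every stopping time τ, (∫_{{τ<∞}} |f_τ g_τ|^p v dμ)^{1/p} ≤ C' ‖f‖_{L^{p₁}(ω₁)} ‖g‖_{L^{p₂}(ω₂)} for some constant C' depending only on C and p. -/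

import Mathlib

open MeasureTheory Filter ENNReal

noncomputable section

private lemma stopped_condexp_indicator
    {Ω : Type*} {m0 : MeasurableSpace Ω} {μ : Measure Ω} [IsProbabilityMeasure μ]
    (ℱ : Filtration ℕ m0) (τ : Ω → ℕ∞)
    (hτ : ∀ n : ℕ, MeasurableSet[ℱ n] {x | τ x ≤ (n : ℕ∞)})
    (B : Set Ω) (hBm : MeasurableSet B)
    (hB : ∀ m : ℕ, MeasurableSet[ℱ m] (B ∩ {x | τ x ≤ (m : ℕ∞)}))
    (f : Ω → ℝ) (hf : Integrable f μ) (n : ℕ) :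
    ∀ᵐ x ∂μ, (τ x = (n : ℕ∞) ∧ x ∈ B) → (μ[B.indicator f|ℱ n]) x = (μ[f|ℱ n]) x := by
  classical
  set s₁ : Set Ω := {x | τ x ≤ (n : ℕ∞)} \ (B ∩ {x | τ x ≤ (n : ℕ∞)}) with hs₁def
  set s₂ : Set Ω := {x | τ x ≤ (n : ℕ∞)}ᶜ with hs₂def
  have hs₁ : MeasurableSet[ℱ n] s₁ := (hτ n).diff (hB n)
  have hs₂ : MeasurableSet[ℱ n] s₂ := (hτ n).compl
  have hs₁0 : MeasurableSet s₁ := ℱ.le n _ hs₁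
  have hs₂0 : MeasurableSet s₂ := ℱ.le n _ hs₂
  have hdecomp : Bᶜ.indicator f = s₁.indicator f + s₂.indicator (Bᶜ.indicator f) := by
    funext x
    by_cases hxB : x ∈ B <;> by_cases hxτ : τ x ≤ (n : ℕ∞) <;>
      simp [Set.indicator_apply, hs₁def, hs₂def, hxB, hxτ]
  have h1 : μ[Bᶜ.indicator f|ℱ n] =ᵐ[μ]
      s₁.indicator (μ[f|ℱ n]) + s₂.indicator (μ[Bᶜ.indicator f|ℱ n]) := by
    nth_rewrite 1 [hdecomp]
    refine (condExp_add (hf.indicator hs₁0) ((hf.indicator hBm.compl).indicator hs₂0) _).trans ?_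
    exact EventuallyEq.add (condExp_indicator hf hs₁)
      (condExp_indicator (hf.indicator hBm.compl) hs₂)
  have h2 : μ[f|ℱ n] =ᵐ[μ] μ[B.indicator f|ℱ n] + μ[Bᶜ.indicator f|ℱ n] := by
    nth_rewrite 1 [← Set.indicator_self_add_compl B f]
    exact condExp_add (hf.indicator hBm) (hf.indicator hBm.compl) _
  filter_upwards [h1, h2] with x hx1 hx2 hx
  obtain ⟨hτx, hxB⟩ := hx
  have hxs₁ : x ∉ s₁ := fun hmem => hmem.2 ⟨hxB, hmem.1⟩
  have hxs₂ : x ∉ s₂ := by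
    simp only [hs₂def, Set.mem_compl_iff, Set.mem_setOf_eq, not_not]
    exact le_of_eq hτx
  have h0 : (μ[Bᶜ.indicator f|ℱ n]) x = 0 := by
    rw [hx1]
    simp [Set.indicator_of_notMem hxs₁, Set.indicator_of_notMem hxs₂]
  rw [hx2, Pi.add_apply, h0, add_zero]

theorem stmt_1
    {Ω : Type*} {m0 : MeasurableSpace Ω} {μ : Measure Ω} [IsProbabilityMeasure μ]
    (ℱ : Filtration ℕ m0)
    (v ω₁ ω₂ : Ω → ℝ)
    (hv : ∀ x, 0 < v x) (hω₁ : ∀ x, 0 < ω₁ x) (hω₂ : ∀ x, 0 < ω₂ x)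
    (hvI : Integrable v μ) (hω₁I : Integrable ω₁ μ) (hω₂I : Integrable ω₂ μ)
    (p p₁ p₂ C : ℝ) (hp₁ : 1 < p₁) (hp₂ : 1 < p₂)
    (hp : 1 / p = 1 / p₁ + 1 / p₂) (hC : 0 < C)
    (H : ∀ f g : Ω → ℝ, Integrable f μ →
      Integrable (fun x => |f x| ^ p₁ * ω₁ x) μ →
      Integrable g μ →
      Integrable (fun x => |g x| ^ p₂ * ω₂ x) μ →
      ∀ lam : ℝ, 0 < lam →
        lam * (∫ x in {x | ENNReal.ofReal lam <
            ⨆ n, ENNReal.ofReal (|(μ[f|ℱ n]) x| * |(μ[g|ℱ n]) x|)}, v x ∂μ) ^ (1 / p)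
          ≤ C * (∫ x, |f x| ^ p₁ * ω₁ x ∂μ) ^ (1 / p₁)
              * (∫ x, |g x| ^ p₂ * ω₂ x ∂μ) ^ (1 / p₂)) :
    ∃ C' : ℝ, 0 < C' ∧
      ∀ τ : Ω → ℕ∞, (∀ n : ℕ, MeasurableSet[ℱ n] {x | τ x ≤ (n : ℕ∞)}) →
      ∀ f g : Ω → ℝ, Integrable f μ →
        Integrable (fun x => |f x| ^ p₁ * ω₁ x) μ →
        Integrable g μ →
        Integrable (fun x => |g x| ^ p₂ * ω₂ x) μ →
        (∫ x in {x | τ x ≠ ⊤},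
            |(μ[f|ℱ (τ x).toNat]) x * (μ[g|ℱ (τ x).toNat]) x| ^ p * v x ∂μ) ^ (1 / p)
          ≤ C' * (∫ x, |f x| ^ p₁ * ω₁ x ∂μ) ^ (1 / p₁)
              * (∫ x, |g x| ^ p₂ * ω₂ x ∂μ) ^ (1 / p₂) := by
  classical
  have hp₁0 : (0:ℝ) < p₁ := lt_trans one_pos hp₁
  have hp₂0 : (0:ℝ) < p₂ := lt_trans one_pos hp₂
  have hpinv : 0 < 1 / p := by
    rw [hp]; positivity
  have hppos : 0 < p := one_div_pos.mp hpinv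
  have hpne : p ≠ 0 := ne_of_gt hppos
  have hplt₁ : p < p₁ := by
    have h : 1 / p₁ < 1 / p := by
      rw [hp]
      have := one_div_pos.mpr hp₂0
      linarith
    exact lt_of_one_div_lt_one_div hp₁0 h
  have hplt₂ : p < p₂ := by
    have h : 1 / p₂ < 1 / p := by
      rw [hp]
      have := one_div_pos.mpr hp₁0
      linarith
    exact lt_of_one_div_lt_one_div hp₂0 h
  refine ⟨2 * C, by positivity, ?_⟩
  intro τ hτn f g hfI hfω hgI hgω
  -- basic measurability facts
  have hMle : ∀ n : ℕ, MeasurableSet {x | τ x ≤ (n : ℕ∞)} := fun n => ℱ.le n _ (hτn n)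
  set S : Set Ω := {x | τ x ≠ ⊤} with hSdef
  have hSeq : S = ⋃ n : ℕ, {x | τ x ≤ (n : ℕ∞)} := by
    ext x
    simp only [Set.mem_iUnion, Set.mem_setOf_eq, hSdef]
    constructor
    · intro h
      obtain ⟨j, hj⟩ := WithTop.ne_top_iff_exists.mp h
      exact ⟨j, le_of_eq hj.symm⟩
    · rintro ⟨j, hj⟩ h
      rw [h] at hj
      simp at hj
  have hSmeas : MeasurableSet S := by
    rw [hSeq]; exact MeasurableSet.iUnion fun n => hMle n
  set φ : Ω → ℕ := fun x => (τ x).toNat with hφdef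
  have hφmeas : Measurable φ := by
    apply measurable_to_countable'
    intro m
    match m with
    | 0 =>
      have h0 : φ ⁻¹' {0} = {x | τ x ≤ ((0:ℕ) : ℕ∞)} ∪ Sᶜ := by
        ext x
        simp only [Set.mem_preimage, Set.mem_singleton_iff, Set.mem_union, Set.mem_setOf_eq,
          Set.mem_compl_iff, hφdef, hSdef, not_not]
        cases hx : τ x with
        | top => simp
        | coe j =>
          simp only [hx, ENat.toNat_coe, Nat.cast_le]
          constructor
          · intro h; exact Or.inl (by omega)
          · rintro (h | h)
            · omega
            · exact absurd h (by simp)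
      rw [h0]; exact (hMle 0).union hSmeas.compl
    | Nat.succ m =>
      have h0 : φ ⁻¹' {m+1} = {x | τ x ≤ ((m+1:ℕ) : ℕ∞)} \ {x | τ x ≤ ((m:ℕ) : ℕ∞)} := by
        ext x
        cases hx : τ x with
        | top =>
          simp only [Set.mem_preimage, Set.mem_singleton_iff, Set.mem_diff, Set.mem_setOf_eq,
            hφdef, hx]
          constructor
          · intro h; simp [ENat.toNat_top] at h
          · rintro ⟨h1, -⟩
            exact absurd (top_le_iff.mp h1) (by exact_mod_cast ENat.coe_ne_top (m+1))
        | coe j =>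
          simp only [Set.mem_preimage, Set.mem_singleton_iff, Set.mem_diff, Set.mem_setOf_eq,
            hφdef, hx, ENat.toNat_coe, Nat.cast_le]
          omega
      rw [h0]; exact (hMle (m+1)).diff (hMle m)
  have hcond : ∀ (h : Ω → ℝ) (n : ℕ), Measurable (μ[h|ℱ n]) := fun h n =>
    (stronglyMeasurable_condExp.mono (ℱ.le n)).measurable
  have hGaux : ∀ h : Ω → ℝ, Measurable (fun x => (μ[h|ℱ (φ x)]) x) := by
    intro h
    have hm : Measurable (fun q : Ω × ℕ => (μ[h|ℱ q.2]) q.1) :=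
      measurable_from_prod_countable_left fun n => hcond h n
    exact hm.comp (measurable_id.prodMk hφmeas)
  set G : Ω → ℝ := fun x => |(μ[f|ℱ (φ x)]) x * (μ[g|ℱ (φ x)]) x| with hGdef
  have hGmeas : Measurable G := continuous_abs.measurable.comp ((hGaux f).mul (hGaux g))
  have hGnonneg : ∀ x, 0 ≤ G x := fun x => abs_nonneg _
  set E : ℤ → Set Ω := fun k => S ∩ {x | G x ∈ Set.Ioc ((2:ℝ)^k) ((2:ℝ)^(k+1))} with hEdef
  have hEmeas : ∀ k, MeasurableSet (E k) := fun k => hSmeas.inter (hGmeas measurableSet_Ioc)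
  have hEdisj : Pairwise (Function.onFun Disjoint E) := by
    have key : ∀ k l : ℤ, k < l → Disjoint (E k) (E l) := by
      intro k l hkl
      rw [Set.disjoint_left]
      rintro x ⟨-, hk⟩ ⟨-, hl⟩
      have h1 : G x ≤ (2:ℝ)^(k+1) := hk.2
      have h2 : (2:ℝ)^l < G x := hl.1
      have h3 : (2:ℝ)^(k+1) ≤ (2:ℝ)^l := zpow_le_zpow_right₀ one_le_two (by omega)
      linarith
    intro k l hkl
    rcases hkl.lt_or_gt with h | h
    · exact key k l h
    · exact (key l k h).symm
  set W : Ω → ℝ≥0∞ := fun x => (ENNReal.ofReal (G x))^p * ENNReal.ofReal (v x) with hWdef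
  set a : ℤ → ℝ≥0∞ := fun k => ∫⁻ x in E k, ENNReal.ofReal (|f x| ^ p₁ * ω₁ x) ∂μ with hadef
  set b : ℤ → ℝ≥0∞ := fun k => ∫⁻ x in E k, ENNReal.ofReal (|g x| ^ p₂ * ω₂ x) ∂μ with hbdef
  -- the key per-level estimate
  have hkey : ∀ k : ℤ, ∫⁻ x in E k, W x ∂μ ≤
      (ENNReal.ofReal 2 ^ p * ENNReal.ofReal (C ^ p)) * (a k ^ (p/p₁) * b k ^ (p/p₂)) := by
    intro k
    have hBm : MeasurableSet (E k) := hEmeas k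
    have hτeqF : ∀ j : ℕ, MeasurableSet[ℱ j] {x | τ x = (j:ℕ∞)} := by
      intro j
      match j with
      | 0 =>
        have h0 : {x | τ x = ((0:ℕ):ℕ∞)} = {x | τ x ≤ ((0:ℕ):ℕ∞)} := by
          ext x
          simp [le_zero_iff]
        rw [h0]; exact hτn 0
      | Nat.succ j =>
        have h0 : {x | τ x = ((j+1:ℕ):ℕ∞)} =
            {x | τ x ≤ ((j+1:ℕ):ℕ∞)} \ {x | τ x ≤ ((j:ℕ):ℕ∞)} := by
          ext x
          cases hx : τ x with
          | top => simp [hx, eq_comm]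
          | coe i =>
            simp only [Set.mem_setOf_eq, Set.mem_diff, hx, Nat.cast_le, Nat.cast_inj]
            omega
        rw [h0]
        exact (hτn (j+1)).diff ((ℱ.mono (Nat.le_succ j)) _ (hτn j))
    have hB : ∀ m : ℕ, MeasurableSet[ℱ m] (E k ∩ {x | τ x ≤ (m : ℕ∞)}) := by
      intro m
      have heq : E k ∩ {x | τ x ≤ (m : ℕ∞)} =
          ⋃ j ∈ Finset.range (m+1), ({x | τ x = (j:ℕ∞)} ∩
            {x | |(μ[f|ℱ j]) x * (μ[g|ℱ j]) x| ∈ Set.Ioc ((2:ℝ)^k) ((2:ℝ)^(k+1))}) := by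
        ext x
        simp only [Set.mem_inter_iff, Set.mem_iUnion, Finset.mem_range, Set.mem_setOf_eq,
          hEdef, hSdef]
        constructor
        · rintro ⟨⟨hxS, hxG⟩, hxm⟩
          obtain ⟨j, hj⟩ := WithTop.ne_top_iff_exists.mp hxS
          have hj' : τ x = (j:ℕ∞) := by exact_mod_cast hj.symm
          have hφx : φ x = j := by show (τ x).toNat = j; rw [hj']; exact ENat.toNat_coe j
          refine ⟨j, ?_, hj', ?_⟩
          · have hle : ((j:ℕ∞)) ≤ (m:ℕ∞) := by rw [← hj']; exact hxm
            exact Nat.lt_succ_of_le (Nat.cast_le.mp hle)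
          · simpa [hGdef, hφx] using hxG
        · rintro ⟨j, hjm, hτx, hxG⟩
          have hφx : φ x = j := by show (τ x).toNat = j; rw [hτx]; exact ENat.toNat_coe j
          have hxS : τ x ≠ ⊤ := by rw [hτx]; simp
          refine ⟨⟨hxS, ?_⟩, ?_⟩
          · simpa [hGdef, hφx] using hxG
          · rw [hτx]
            exact Nat.cast_le.mpr (Nat.lt_succ_iff.mp hjm)
      rw [heq]
      refine MeasurableSet.biUnion (Finset.range (m+1)).countable_toSet ?_
      intro j hj
      have hjm : j ≤ m := Nat.lt_succ_iff.mp (Finset.mem_range.mp hj)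
      refine (ℱ.mono hjm) _ (MeasurableSet.inter (hτeqF j) ?_)
      have hmeasj : Measurable[ℱ j] fun x => |(μ[f|ℱ j]) x * (μ[g|ℱ j]) x| :=
        continuous_abs.measurable.comp
          (stronglyMeasurable_condExp.measurable.mul stronglyMeasurable_condExp.measurable)
      exact hmeasj measurableSet_Ioc
    have hkf := fun n => stopped_condexp_indicator ℱ τ hτn (E k) hBm hB f hfI n
    have hkg := fun n => stopped_condexp_indicator ℱ τ hτn (E k) hBm hB g hgI n
    have hindfeq : ∀ x, |(E k).indicator f x| ^ p₁ * ω₁ x =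
        (E k).indicator (fun x => |f x| ^ p₁ * ω₁ x) x := by
      intro x
      by_cases hx : x ∈ E k
      · simp [Set.indicator_of_mem hx]
      · simp [Set.indicator_of_notMem hx, Real.zero_rpow (ne_of_gt hp₁0)]
    have hindgeq : ∀ x, |(E k).indicator g x| ^ p₂ * ω₂ x =
        (E k).indicator (fun x => |g x| ^ p₂ * ω₂ x) x := by
      intro x
      by_cases hx : x ∈ E k
      · simp [Set.indicator_of_mem hx]
      · simp [Set.indicator_of_notMem hx, Real.zero_rpow (ne_of_gt hp₂0)]
    have hfωB : Integrable (fun x => |(E k).indicator f x| ^ p₁ * ω₁ x) μ :=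
      (hfω.indicator hBm).congr (Eventually.of_forall fun x => (hindfeq x).symm)
    have hgωB : Integrable (fun x => |(E k).indicator g x| ^ p₂ * ω₂ x) μ :=
      (hgω.indicator hBm).congr (Eventually.of_forall fun x => (hindgeq x).symm)
    have hlam : (0:ℝ) < (2:ℝ)^k := zpow_pos (by norm_num) k
    have hH := H ((E k).indicator f) ((E k).indicator g) (hfI.indicator hBm) hfωB
      (hgI.indicator hBm) hgωB ((2:ℝ)^k) hlam
    set U : Set Ω := {x | ENNReal.ofReal ((2:ℝ)^k) <
        ⨆ n, ENNReal.ofReal (|(μ[(E k).indicator f|ℱ n]) x| *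
          |(μ[(E k).indicator g|ℱ n]) x|)} with hUdef
    have hsub : E k ≤ᵐ[μ] U := by
      have h1 : ∀ᵐ x ∂μ, ∀ n : ℕ, (τ x = (n : ℕ∞) ∧ x ∈ E k) →
          (μ[(E k).indicator f|ℱ n]) x = (μ[f|ℱ n]) x := ae_all_iff.mpr hkf
      have h2 : ∀ᵐ x ∂μ, ∀ n : ℕ, (τ x = (n : ℕ∞) ∧ x ∈ E k) →
          (μ[(E k).indicator g|ℱ n]) x = (μ[g|ℱ n]) x := ae_all_iff.mpr hkg
      filter_upwards [h1, h2] with x hxf hxg hxB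
      obtain ⟨j, hj⟩ := WithTop.ne_top_iff_exists.mp hxB.1
      have hj' : τ x = (j:ℕ∞) := by exact_mod_cast hj.symm
      have hφx : φ x = j := by show (τ x).toNat = j; rw [hj']; exact ENat.toNat_coe j
      have hef := hxf j ⟨hj', hxB⟩
      have heg := hxg j ⟨hj', hxB⟩
      have hGx : G x = |(μ[(E k).indicator f|ℱ j]) x| * |(μ[(E k).indicator g|ℱ j]) x| := by
        have hGx0 : G x = |(μ[f|ℱ j]) x| * |(μ[g|ℱ j]) x| := by
          rw [hGdef]; dsimp only; rw [hφx, abs_mul]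
        rw [hGx0, ← hef, ← heg]
      show x ∈ U
      rw [hUdef]
      simp only [Set.mem_setOf_eq]
      calc ENNReal.ofReal ((2:ℝ)^k) < ENNReal.ofReal (G x) :=
            (ENNReal.ofReal_lt_ofReal_iff (lt_trans hlam hxB.2.1)).mpr hxB.2.1
        _ = ENNReal.ofReal (|(μ[(E k).indicator f|ℱ j]) x| *
              |(μ[(E k).indicator g|ℱ j]) x|) := by rw [hGx]
        _ ≤ ⨆ n, ENNReal.ofReal (|(μ[(E k).indicator f|ℱ n]) x| *
              |(μ[(E k).indicator g|ℱ n]) x|) :=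
            le_iSup (fun n => ENNReal.ofReal (|(μ[(E k).indicator f|ℱ n]) x| *
              |(μ[(E k).indicator g|ℱ n]) x|)) j
    have hvB : (0:ℝ) ≤ ∫ x in E k, v x ∂μ := integral_nonneg fun x => (hv x).le
    have hvU : ∫ x in E k, v x ∂μ ≤ ∫ x in U, v x ∂μ :=
      setIntegral_mono_set hvI.integrableOn (Eventually.of_forall fun x => (hv x).le) hsub
    set J₁ : ℝ := ∫ x, |(E k).indicator f x| ^ p₁ * ω₁ x ∂μ with hJ₁def
    set J₂ : ℝ := ∫ x, |(E k).indicator g x| ^ p₂ * ω₂ x ∂μ with hJ₂def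
    have hJ₁nonneg : 0 ≤ J₁ := integral_nonneg fun x =>
      mul_nonneg (Real.rpow_nonneg (abs_nonneg _) _) (hω₁ x).le
    have hJ₂nonneg : 0 ≤ J₂ := integral_nonneg fun x =>
      mul_nonneg (Real.rpow_nonneg (abs_nonneg _) _) (hω₂ x).le
    have hstep : (2:ℝ)^k * (∫ x in E k, v x ∂μ) ^ (1/p) ≤ C * J₁ ^ (1/p₁) * J₂ ^ (1/p₂) := by
      refine le_trans ?_ hH
      exact mul_le_mul_of_nonneg_left (Real.rpow_le_rpow hvB hvU (le_of_lt hpinv)) hlam.le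
    have hLHSnn : 0 ≤ (2:ℝ)^k * (∫ x in E k, v x ∂μ) ^ (1/p) :=
      mul_nonneg hlam.le (Real.rpow_nonneg hvB _)
    have hpow := Real.rpow_le_rpow hLHSnn hstep hppos.le
    have hlhs : ((2:ℝ)^k * (∫ x in E k, v x ∂μ) ^ (1/p)) ^ p =
        ((2:ℝ)^k) ^ p * (∫ x in E k, v x ∂μ) := by
      rw [Real.mul_rpow hlam.le (Real.rpow_nonneg hvB _), ← Real.rpow_mul hvB,
        one_div_mul_cancel hpne, Real.rpow_one]
    have hrhs : (C * J₁ ^ (1/p₁) * J₂ ^ (1/p₂)) ^ p = C^p * J₁ ^ (p/p₁) * J₂ ^ (p/p₂) := by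
      rw [Real.mul_rpow (mul_nonneg hC.le (Real.rpow_nonneg hJ₁nonneg _))
          (Real.rpow_nonneg hJ₂nonneg _),
        Real.mul_rpow hC.le (Real.rpow_nonneg hJ₁nonneg _),
        ← Real.rpow_mul hJ₁nonneg, ← Real.rpow_mul hJ₂nonneg,
        one_div_mul_eq_div, one_div_mul_eq_div]
    rw [hlhs, hrhs] at hpow
    have hofvB : ∫⁻ x in E k, ENNReal.ofReal (v x) ∂μ = ENNReal.ofReal (∫ x in E k, v x ∂μ) :=
      (ofReal_integral_eq_lintegral_ofReal hvI.restrict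
        (Eventually.of_forall fun x => (hv x).le)).symm
    have ha : a k = ENNReal.ofReal J₁ := by
      have h1 : J₁ = ∫ x in E k, |f x| ^ p₁ * ω₁ x ∂μ := by
        rw [hJ₁def, ← integral_indicator hBm]
        exact integral_congr_ae (Eventually.of_forall fun x => hindfeq x)
      rw [hadef, h1]
      exact (ofReal_integral_eq_lintegral_ofReal hfω.restrict (Eventually.of_forall fun x =>
        mul_nonneg (Real.rpow_nonneg (abs_nonneg _) _) (hω₁ x).le)).symm
    have hb : b k = ENNReal.ofReal J₂ := by
      have h1 : J₂ = ∫ x in E k, |g x| ^ p₂ * ω₂ x ∂μ := by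
        rw [hJ₂def, ← integral_indicator hBm]
        exact integral_congr_ae (Eventually.of_forall fun x => hindgeq x)
      rw [hbdef, h1]
      exact (ofReal_integral_eq_lintegral_ofReal hgω.restrict (Eventually.of_forall fun x =>
        mul_nonneg (Real.rpow_nonneg (abs_nonneg _) _) (hω₂ x).le)).symm
    calc ∫⁻ x in E k, W x ∂μ
        ≤ ∫⁻ x in E k, (ENNReal.ofReal ((2:ℝ)^(k+1)))^p * ENNReal.ofReal (v x) ∂μ := by
          refine lintegral_mono_ae ((ae_restrict_iff' hBm).mpr
            (Eventually.of_forall fun x hx => ?_))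
          rw [hWdef]; dsimp only
          exact mul_le_mul_left
            (ENNReal.rpow_le_rpow (ENNReal.ofReal_le_ofReal hx.2.2) hppos.le) _
      _ = (ENNReal.ofReal ((2:ℝ)^(k+1)))^p * ∫⁻ x in E k, ENNReal.ofReal (v x) ∂μ :=
          lintegral_const_mul' _ _
            (ENNReal.rpow_ne_top_of_nonneg hppos.le ENNReal.ofReal_ne_top)
      _ = ENNReal.ofReal 2 ^ p * ((ENNReal.ofReal ((2:ℝ)^k))^p *
            ENNReal.ofReal (∫ x in E k, v x ∂μ)) := by
          rw [hofvB]
          have h2 : ((2:ℝ)^(k+1)) = 2 * (2:ℝ)^k := by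
            rw [zpow_add_one₀ (two_ne_zero), mul_comm]
          rw [h2, ENNReal.ofReal_mul (by norm_num : (0:ℝ) ≤ 2),
            ENNReal.mul_rpow_of_nonneg _ _ hppos.le, mul_assoc]
      _ ≤ ENNReal.ofReal 2 ^ p * (ENNReal.ofReal (C^p * J₁^(p/p₁) * J₂^(p/p₂))) := by
          refine mul_le_mul_right ?_ _
          rw [ENNReal.ofReal_rpow_of_nonneg hlam.le hppos.le,
            ← ENNReal.ofReal_mul (Real.rpow_nonneg hlam.le _)]
          exact ENNReal.ofReal_le_ofReal hpow
      _ = (ENNReal.ofReal 2 ^ p * ENNReal.ofReal (C ^ p)) * (a k ^ (p/p₁) * b k ^ (p/p₂)) := by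
          rw [ha, hb,
            ENNReal.ofReal_mul (mul_nonneg (Real.rpow_nonneg hC.le _)
              (Real.rpow_nonneg hJ₁nonneg _)),
            ENNReal.ofReal_mul (Real.rpow_nonneg hC.le _),
            ← ENNReal.ofReal_rpow_of_nonneg hJ₁nonneg (by positivity),
            ← ENNReal.ofReal_rpow_of_nonneg hJ₂nonneg (by positivity)]
          ring
  -- assembling
  have hzmeas : MeasurableSet (S ∩ {x | G x ≤ 0}) := hSmeas.inter (hGmeas measurableSet_Iic)
  have hzero : ∫⁻ x in S ∩ {x | G x ≤ 0}, W x ∂μ = 0 := by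
    have hW0 : ∀ᵐ x ∂μ, x ∈ S ∩ {x | G x ≤ 0} → W x = 0 :=
      Eventually.of_forall fun x hx => by
        have hG0 : G x = 0 := le_antisymm hx.2 (hGnonneg x)
        rw [hWdef]; dsimp only
        rw [hG0, ENNReal.ofReal_zero, ENNReal.zero_rpow_of_pos hppos, zero_mul]
    rw [setLIntegral_congr_fun_ae hzmeas hW0]
    simp
  have hcover : S ⊆ (⋃ k, E k) ∪ (S ∩ {x | G x ≤ 0}) := by
    intro x hxS
    rcases le_or_gt (G x) 0 with h | h
    · exact Or.inr ⟨hxS, h⟩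
    · obtain ⟨kk, hkk⟩ := _root_.exists_mem_Ioc_zpow h one_lt_two
      exact Or.inl (Set.mem_iUnion.mpr ⟨kk, hxS, hkk⟩)
  have hdisj2 : Disjoint (⋃ k, E k) (S ∩ {x | G x ≤ 0}) := by
    rw [Set.disjoint_left]
    rintro x hx hx2
    obtain ⟨k, hk⟩ := Set.mem_iUnion.mp hx
    have h1 : (2:ℝ)^k < G x := hk.2.1
    have h2 : (0:ℝ) < (2:ℝ)^k := zpow_pos (by norm_num) k
    have h3 : G x ≤ 0 := hx2.2
    linarith
  set L₁ : ℝ≥0∞ := ∫⁻ x, ENNReal.ofReal (|f x| ^ p₁ * ω₁ x) ∂μ with hL₁def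
  set L₂ : ℝ≥0∞ := ∫⁻ x, ENNReal.ofReal (|g x| ^ p₂ * ω₂ x) ∂μ with hL₂def
  have hT : ∫⁻ x in S, W x ∂μ ≤
      (ENNReal.ofReal 2 ^ p * ENNReal.ofReal (C ^ p)) * (L₁ ^ (p/p₁) * L₂ ^ (p/p₂)) := by
    have hconj : (p₁/p).HolderConjugate (p₂/p) := by
      rw [Real.holderConjugate_iff]
      constructor
      · exact (one_lt_div hppos).mpr hplt₁
      · rw [← one_div, ← one_div, one_div_div, one_div_div]
        have hmul : p / p₁ + p / p₂ = p * (1/p₁) + p * (1/p₂) := by ring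
        rw [hmul, ← mul_add, ← hp, mul_one_div_cancel hpne]
    have hH2 := ENNReal.lintegral_mul_le_Lp_mul_Lq (Measure.count : Measure ℤ) hconj
      (f := fun k => a k ^ (p/p₁)) (g := fun k => b k ^ (p/p₂))
      (measurable_of_countable _).aemeasurable (measurable_of_countable _).aemeasurable
    simp only [Pi.mul_apply] at hH2
    rw [lintegral_count, lintegral_count, lintegral_count] at hH2
    have e1 : ∀ k : ℤ, (a k ^ (p/p₁)) ^ (p₁/p) = a k := by
      intro k
      rw [← ENNReal.rpow_mul]
      have : (p/p₁) * (p₁/p) = 1 := by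
        field_simp
      rw [this, ENNReal.rpow_one]
    have e1b : ∀ k : ℤ, (b k ^ (p/p₂)) ^ (p₂/p) = b k := by
      intro k
      rw [← ENNReal.rpow_mul]
      have : (p/p₂) * (p₂/p) = 1 := by
        field_simp
      rw [this, ENNReal.rpow_one]
    have e2 : 1/(p₁/p) = p/p₁ := one_div_div _ _
    have e3 : 1/(p₂/p) = p/p₂ := one_div_div _ _
    simp only [e1, e1b, e2, e3] at hH2
    calc ∫⁻ x in S, W x ∂μ
        ≤ ∫⁻ x in (⋃ k, E k) ∪ (S ∩ {x | G x ≤ 0}), W x ∂μ := lintegral_mono_set hcover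
      _ = ∫⁻ x in ⋃ k, E k, W x ∂μ + ∫⁻ x in S ∩ {x | G x ≤ 0}, W x ∂μ :=
          lintegral_union hzmeas hdisj2
      _ = ∫⁻ x in ⋃ k, E k, W x ∂μ := by rw [hzero, add_zero]
      _ = ∑' k : ℤ, ∫⁻ x in E k, W x ∂μ := lintegral_iUnion hEmeas hEdisj _
      _ ≤ ∑' k : ℤ, (ENNReal.ofReal 2 ^ p * ENNReal.ofReal (C ^ p)) *
            (a k ^ (p/p₁) * b k ^ (p/p₂)) := ENNReal.tsum_le_tsum hkey
      _ = (ENNReal.ofReal 2 ^ p * ENNReal.ofReal (C ^ p)) *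
            ∑' k : ℤ, a k ^ (p/p₁) * b k ^ (p/p₂) := ENNReal.tsum_mul_left
      _ ≤ (ENNReal.ofReal 2 ^ p * ENNReal.ofReal (C ^ p)) *
            ((∑' k : ℤ, a k) ^ (p/p₁) * (∑' k : ℤ, b k) ^ (p/p₂)) := by
          exact mul_le_mul_right hH2 _
      _ ≤ (ENNReal.ofReal 2 ^ p * ENNReal.ofReal (C ^ p)) * (L₁ ^ (p/p₁) * L₂ ^ (p/p₂)) := by
          refine mul_le_mul_right (mul_le_mul' ?_ ?_) _
          · refine ENNReal.rpow_le_rpow ?_ (by positivity)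
            rw [hadef, ← lintegral_iUnion hEmeas hEdisj]
            exact setLIntegral_le_lintegral _ _
          · refine ENNReal.rpow_le_rpow ?_ (by positivity)
            rw [hbdef, ← lintegral_iUnion hEmeas hEdisj]
            exact setLIntegral_le_lintegral _ _
  -- back to real integrals
  set I₁ : ℝ := ∫ x, |f x| ^ p₁ * ω₁ x ∂μ with hI₁def
  set I₂ : ℝ := ∫ x, |g x| ^ p₂ * ω₂ x ∂μ with hI₂def
  have hI₁nn : 0 ≤ I₁ := integral_nonneg fun x =>
    mul_nonneg (Real.rpow_nonneg (abs_nonneg _) _) (hω₁ x).le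
  have hI₂nn : 0 ≤ I₂ := integral_nonneg fun x =>
    mul_nonneg (Real.rpow_nonneg (abs_nonneg _) _) (hω₂ x).le
  have hL₁ : L₁ = ENNReal.ofReal I₁ :=
    (ofReal_integral_eq_lintegral_ofReal hfω (Eventually.of_forall fun x =>
      mul_nonneg (Real.rpow_nonneg (abs_nonneg _) _) (hω₁ x).le)).symm
  have hL₂ : L₂ = ENNReal.ofReal I₂ :=
    (ofReal_integral_eq_lintegral_ofReal hgω (Eventually.of_forall fun x =>
      mul_nonneg (Real.rpow_nonneg (abs_nonneg _) _) (hω₂ x).le)).symm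
  rw [hL₁, hL₂] at hT
  have hint1 : ∫ x in S, G x ^ p * v x ∂μ = (∫⁻ x in S, W x ∂μ).toReal := by
    rw [integral_eq_lintegral_of_nonneg_ae
      (Eventually.of_forall fun x => mul_nonneg (Real.rpow_nonneg (hGnonneg x) _) (hv x).le)
      (((Real.continuous_rpow_const hppos.le).measurable.comp hGmeas).aestronglyMeasurable.mul
        hvI.aestronglyMeasurable.restrict)]
    congr 1
    refine lintegral_congr_ae ((ae_restrict_iff' hSmeas).mpr
      (Eventually.of_forall fun x _ => ?_))
    rw [hWdef]; dsimp only
    rw [ENNReal.ofReal_mul (Real.rpow_nonneg (hGnonneg x) _),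
      ← ENNReal.ofReal_rpow_of_nonneg (hGnonneg x) hppos.le]
  have hRne : (ENNReal.ofReal 2 ^ p * ENNReal.ofReal (C ^ p)) *
      ((ENNReal.ofReal I₁) ^ (p/p₁) * (ENNReal.ofReal I₂) ^ (p/p₂)) ≠ ⊤ := by
    apply ENNReal.mul_ne_top
    · exact ENNReal.mul_ne_top
        (ENNReal.rpow_ne_top_of_nonneg hppos.le ENNReal.ofReal_ne_top) ENNReal.ofReal_ne_top
    · exact ENNReal.mul_ne_top
        (ENNReal.rpow_ne_top_of_nonneg (by positivity) ENNReal.ofReal_ne_top)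
        (ENNReal.rpow_ne_top_of_nonneg (by positivity) ENNReal.ofReal_ne_top)
  have hfinal : ∫ x in S, G x ^ p * v x ∂μ ≤
      (2:ℝ) ^ p * C ^ p * (I₁ ^ (p/p₁) * I₂ ^ (p/p₂)) := by
    rw [hint1]
    refine le_trans (ENNReal.toReal_mono hRne hT) (le_of_eq ?_)
    rw [ENNReal.toReal_mul, ENNReal.toReal_mul, ENNReal.toReal_mul,
      ← ENNReal.toReal_rpow, ← ENNReal.toReal_rpow, ← ENNReal.toReal_rpow,
      ENNReal.toReal_ofReal (by norm_num : (0:ℝ) ≤ 2),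
      ENNReal.toReal_ofReal (Real.rpow_nonneg hC.le _),
      ENNReal.toReal_ofReal hI₁nn, ENNReal.toReal_ofReal hI₂nn]
  have hintnn : 0 ≤ ∫ x in S, G x ^ p * v x ∂μ :=
    integral_nonneg fun x => mul_nonneg (Real.rpow_nonneg (hGnonneg x) _) (hv x).le
  have hgoal := Real.rpow_le_rpow hintnn hfinal hpinv.le
  have h2pnn : (0:ℝ) ≤ (2:ℝ)^p := Real.rpow_nonneg (by norm_num) _
  have hCpnn : (0:ℝ) ≤ C^p := Real.rpow_nonneg hC.le _
  have hI1e : (0:ℝ) ≤ I₁ ^ (p/p₁) := Real.rpow_nonneg hI₁nn _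
  have hI2e : (0:ℝ) ≤ I₂ ^ (p/p₂) := Real.rpow_nonneg hI₂nn _
  have h2p : ((2:ℝ)^p)^(1/p) = 2 := by
    rw [← Real.rpow_mul (by norm_num : (0:ℝ) ≤ 2), mul_one_div_cancel hpne, Real.rpow_one]
  have hCp : (C^p)^(1/p) = C := by
    rw [← Real.rpow_mul hC.le, mul_one_div_cancel hpne, Real.rpow_one]
  have hexp₁ : p/p₁ * (1/p) = 1/p₁ := by
    rw [div_mul_div_comm, mul_one, mul_comm p₁ p, ← div_div, div_self hpne]
  have hexp₂ : p/p₂ * (1/p) = 1/p₂ := by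
    rw [div_mul_div_comm, mul_one, mul_comm p₂ p, ← div_div, div_self hpne]
  have hI₁p : (I₁^(p/p₁))^(1/p) = I₁^(1/p₁) := by
    rw [← Real.rpow_mul hI₁nn, hexp₁]
  have hI₂p : (I₂^(p/p₂))^(1/p) = I₂^(1/p₂) := by
    rw [← Real.rpow_mul hI₂nn, hexp₂]
  calc (∫ x in S, G x ^ p * v x ∂μ) ^ (1/p)
      ≤ ((2:ℝ) ^ p * C ^ p * (I₁ ^ (p/p₁) * I₂ ^ (p/p₂))) ^ (1/p) := hgoal
    _ = 2 * C * I₁ ^ (1/p₁) * I₂ ^ (1/p₂) := by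
        rw [Real.mul_rpow (mul_nonneg h2pnn hCpnn) (mul_nonneg hI1e hI2e),
          Real.mul_rpow h2pnn hCpnn, Real.mul_rpow hI1e hI2e, h2p, hCp, hI₁p, hI₂p]
        ring

end
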